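/- Let k = 2^s and let I ⊆ [k] be a nonempty interval of consecutive integers with |I| ≤ k/2. Identify [k] with {0,1}^s via binary expansion, and let ∂̃(I) denote the edge-boundary of the corresponding subset of the hypercube {0,1}^s. Then |∂̃(I)| ≤ 6 |I| log₂(k/|I|). -/

import Mathlib

/-- The edge-boundary, in the hypercube `{0,1}^s` (identified with `[k]`, `k = 2^s`, via
binary expansion `φ(x) = 1 + Σ x_i 2^(i-1)`), of a subset `B ⊆ [k]`: each hypercube edge is
counted once, from its endpoint whose `i`-th digit is `0`. -/
def cubeBoundary (k s : ℕ) (B : Finset ℕ) : ℕ :=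
  (((Finset.Icc 1 k ×ˢ Finset.Icc 1 s)).filter
    (fun p => (p.1 - 1).testBit (p.2 - 1) = false ∧
      ((p.1 ∈ B) ≠ (p.1 + 2 ^ (p.2 - 1) ∈ B)))).card

open Finset

private lemma testbit_flip (x j : ℕ) (h : x.testBit j = false) : (x + 2^j).testBit j = true := by
  simp only [Nat.testBit_eq_decide_div_mod_eq, decide_eq_false_iff_not, decide_eq_true_eq] at *
  rw [Nat.add_div_right _ (pow_pos two_pos j)]
  omega

private lemma dir_le_n (k a b j : ℕ) :
    ((Finset.Icc 1 k).filter (fun y => (y-1).testBit j = false ∧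
      ((y ∈ Finset.Icc a b) ≠ (y + 2^j ∈ Finset.Icc a b)))).card ≤ (Finset.Icc a b).card := by
  classical
  apply Finset.card_le_card_of_injOn (fun y => if y ∈ Finset.Icc a b then y else y + 2^j)
  · intro y hy
    simp only [Finset.mem_coe, Finset.mem_filter] at hy
    obtain ⟨hyk, hbit, hne⟩ := hy
    by_cases h : y ∈ Finset.Icc a b
    · simpa [h] using Finset.mem_Icc.mp h
    · simp only [h, if_false]
      by_contra h2
      exact hne (eq_iff_iff.mpr (iff_of_false h h2))
  · intro y hy y' hy' hf
    simp only [Finset.coe_filter, Set.mem_setOf_eq, Finset.mem_Icc] at hy hy'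
    by_cases h1 : y ∈ Finset.Icc a b <;> by_cases h2 : y' ∈ Finset.Icc a b <;>
      simp only [h1, h2, if_true, if_false] at hf
    · exact hf
    · exfalso
      have he : y - 1 = (y' - 1) + 2^j := by
        have := hy'.1.1
        have hp : 0 < 2^j := pow_pos two_pos j
        omega
      have := testbit_flip (y'-1) j hy'.2.1
      rw [← he] at this
      rw [hy.2.1] at this
      exact Bool.false_ne_true this
    · exfalso
      have he : y' - 1 = (y - 1) + 2^j := by
        have := hy.1.1
        have hp : 0 < 2^j := pow_pos two_pos j
        omega
      have := testbit_flip (y-1) j hy.2.1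
      rw [← he] at this
      rw [hy'.2.1] at this
      exact Bool.false_ne_true this
    · omega

private lemma dir_le_2m (k a b j : ℕ) (ha : 1 ≤ a) :
    ((Finset.Icc 1 k).filter (fun y => (y-1).testBit j = false ∧
      ((y ∈ Finset.Icc a b) ≠ (y + 2^j ∈ Finset.Icc a b)))).card ≤ 2 * 2^j := by
  classical
  have hsub : ((Finset.Icc 1 k).filter (fun y => (y-1).testBit j = false ∧
      ((y ∈ Finset.Icc a b) ≠ (y + 2^j ∈ Finset.Icc a b)))) ⊆
      (Finset.Ioc (b - 2^j) b ∪ Finset.Ico (a - 2^j) a) := by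
    intro y hy
    simp only [Finset.mem_filter, Finset.mem_Icc, ne_eq, eq_iff_iff, Finset.mem_union,
      Finset.mem_Ioc, Finset.mem_Ico] at hy ⊢
    obtain ⟨⟨hy1, hyk⟩, _, hne⟩ := hy
    have hp : 0 < 2^j := pow_pos two_pos j
    omega
  calc _ ≤ (Finset.Ioc (b - 2^j) b ∪ Finset.Ico (a - 2^j) a).card := Finset.card_le_card hsub
    _ ≤ (Finset.Ioc (b - 2^j) b).card + (Finset.Ico (a - 2^j) a).card := Finset.card_union_le _ _
    _ ≤ 2 * 2^j := by
        rw [Nat.card_Ioc, Nat.card_Ico]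
        omega

private lemma geom_bound (L : ℕ) : ∑ j ∈ Finset.Ioc 0 L, 2^j ≤ 2^(L+1) := by
  induction L with
  | zero => simp
  | succ M ih =>
    rw [Finset.sum_Ioc_succ_top (Nat.zero_le _)]
    have : (2:ℕ)^(M+1+1) = 2^(M+1) + 2^(M+1) := by ring
    omega

private lemma cube_sum (k s : ℕ) (B : Finset ℕ) :
    cubeBoundary k s B = ∑ j ∈ Finset.Icc 1 s, ((Finset.Icc 1 k).filter
      (fun y => (y-1).testBit (j-1) = false ∧ ((y ∈ B) ≠ (y + 2^(j-1) ∈ B)))).card := by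
  unfold cubeBoundary
  rw [Finset.card_filter, Finset.sum_product, Finset.sum_comm]
  refine Finset.sum_congr rfl fun j _ => ?_
  rw [Finset.card_filter]

/-- For `k = 2^s` and a nonempty interval `I ⊆ [k]` with `|I| ≤ k/2`,
the hypercube edge-boundary of `I` satisfies `|∂̃ I| ≤ 6 |I| log₂(k/|I|)`. -/
theorem stmt2 (s k a b : ℕ) (hs : 0 < s) (hk : k = 2 ^ s)
    (ha : 1 ≤ a) (hab : a ≤ b) (hbk : b ≤ k)
    (hsize : (Finset.Icc a b).card ≤ k / 2) :
    (cubeBoundary k s (Finset.Icc a b) : ℝ) ≤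
      6 * (Finset.Icc a b).card * Real.logb 2 ((k : ℝ) / (Finset.Icc a b).card) := by
  set n := (Finset.Icc a b).card with hn
  have hncard : n = b + 1 - a := Nat.card_Icc a b
  have hn1 : 1 ≤ n := by omega
  set L := Nat.log 2 n with hL
  have hLn : 2^L ≤ n := Nat.pow_log_le_self 2 (by omega)
  have hnL : n < 2^(L+1) := Nat.lt_pow_succ_log_self one_lt_two n
  have h2n : 2 * n ≤ k := by
    have : k = 2 * 2^(s-1) := by
      rw [hk, ← pow_succ']
      congr 1
      omega
    omega
  have hLs : L + 1 ≤ s := by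
    by_contra hcon
    have hsL : s ≤ L := by omega
    have : 2^s ≤ 2^L := Nat.pow_le_pow_right (by norm_num) hsL
    omega
  -- natural number bound
  have key : cubeBoundary k s (Finset.Icc a b) ≤ n * (2 + (s - L)) := by
    rw [cube_sum]
    have step1 : ∑ j ∈ Finset.Icc 1 s, ((Finset.Icc 1 k).filter
        (fun y => (y-1).testBit (j-1) = false ∧
          ((y ∈ Finset.Icc a b) ≠ (y + 2^(j-1) ∈ Finset.Icc a b)))).card
        ≤ ∑ j ∈ Finset.Icc 1 s, min n (2^j) := by
      refine Finset.sum_le_sum fun j hj => ?_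
      have hj1 : 1 ≤ j := (Finset.mem_Icc.mp hj).1
      have h2 : 2 * 2^(j-1) = 2^j := by
        rw [← pow_succ']
        congr 1
        omega
      refine le_min (dir_le_n k a b (j-1)) ?_
      rw [← h2]
      exact dir_le_2m k a b (j-1) ha
    refine step1.trans ?_
    rw [show Finset.Icc 1 s = Finset.Ioc 0 s from rfl,
      ← Finset.sum_Ioc_consecutive _ (Nat.zero_le L) (by omega : L ≤ s)]
    have hA : ∑ j ∈ Finset.Ioc 0 L, min n (2^j) ≤ 2 * n := by
      calc ∑ j ∈ Finset.Ioc 0 L, min n (2^j) ≤ ∑ j ∈ Finset.Ioc 0 L, 2^j :=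
            Finset.sum_le_sum fun j _ => min_le_right _ _
        _ ≤ 2^(L+1) := geom_bound L
        _ ≤ 2 * n := by
            rw [pow_succ]
            omega
    have hB : ∑ j ∈ Finset.Ioc L s, min n (2^j) ≤ n * (s - L) := by
      calc ∑ j ∈ Finset.Ioc L s, min n (2^j) ≤ ∑ j ∈ Finset.Ioc L s, n :=
            Finset.sum_le_sum fun j _ => min_le_left _ _
        _ = n * (s - L) := by rw [Finset.sum_const, Nat.card_Ioc, smul_eq_mul, mul_comm]
    calc ∑ j ∈ Finset.Ioc 0 L, min n (2^j) + ∑ j ∈ Finset.Ioc L s, min n (2^j)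
        ≤ 2 * n + n * (s - L) := Nat.add_le_add hA hB
      _ = n * (2 + (s - L)) := by ring
  -- analytic part
  have hkpos : (0:ℝ) < k := by
    have : 0 < k := by rw [hk]; positivity
    exact_mod_cast this
  have hnpos : (0:ℝ) < n := by exact_mod_cast hn1
  have hlog_eq : Real.logb 2 ((k:ℝ)/n) = s - Real.logb 2 n := by
    rw [Real.logb_div (ne_of_gt hkpos) (ne_of_gt hnpos), hk]
    push_cast
    rw [Real.logb_pow, Real.logb_self_eq_one (by norm_num)]
    ring
  have hlogn : Real.logb 2 (n:ℝ) < L + 1 := by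
    have : (n:ℝ) < 2^(L+1) := by exact_mod_cast hnL
    calc Real.logb 2 (n:ℝ) < Real.logb 2 ((2:ℝ)^(L+1)) := by
          exact Real.logb_lt_logb (by norm_num) hnpos this
      _ = L + 1 := by
          rw [Real.logb_pow, Real.logb_self_eq_one (by norm_num)]
          push_cast; ring
  have hlog1 : 1 ≤ Real.logb 2 ((k:ℝ)/n) := by
    have h2 : (2:ℝ) ≤ (k:ℝ)/n := by
      rw [le_div_iff₀ hnpos]
      exact_mod_cast h2n
    calc (1:ℝ) = Real.logb 2 2 := (Real.logb_self_eq_one (by norm_num)).symm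
      _ ≤ Real.logb 2 ((k:ℝ)/n) := Real.logb_le_logb_of_le (by norm_num) (by norm_num) h2
  -- combine
  set A := Real.logb 2 ((k:ℝ)/n)
  have hAgt : ((s:ℝ) - L) - 1 < A := by
    rw [hlog_eq]
    have : (↑(L+1):ℝ) = (L:ℝ) + 1 := by push_cast; ring
    linarith [hlogn]
  have hcoef : (2 + ((s:ℝ) - L)) ≤ 6 * A := by
    have hd1 : (1:ℝ) ≤ (s:ℝ) - L := by
      have : (L:ℝ) + 1 ≤ s := by exact_mod_cast hLs
      linarith
    linarith
  calc (cubeBoundary k s (Finset.Icc a b) : ℝ) ≤ (n * (2 + (s - L)) : ℕ) := by exact_mod_cast key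
    _ = n * (2 + ((s:ℝ) - L)) := by
        push_cast [Nat.cast_sub (by omega : L ≤ s)]
        ring
    _ ≤ n * (6 * A) := by
        apply mul_le_mul_of_nonneg_left hcoef (le_of_lt hnpos)
    _ = 6 * n * A := by ring
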